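/- Let M be an MDP with states s₁,…,s_m, target sets T₁,…,T_m, and rational coefficients q₁,…,q_{m+1}. Suppose each probability operator has its own scheduler quantifier (n = m). Then for ▷ ∈ {≥, >}: there exist schedulers σ₁,…,σ_m ∈ HR with Σ_{i=1}^m qᵢ · Pr^{σᵢ}_{sᵢ}(◇Tᵢ) ▷ q_{m+1} if and only if there exist memoryless deterministic schedulers σ₁,…,σ_m with the same property; likewise, for every ε ≥ 0, there exist σ₁,…,σ_m ∈ HR with |Σ_{i=1}^m qᵢ · Pr^{σᵢ}_{sᵢ}(◇Tᵢ) − q_{m+1}| > ε if and only if there exist memoryless deterministic such schedulers. That is, MD schedulers suffice when n = m and the comparison is an inequality or disequality. -/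

import Mathlib

open scoped BigOperators Classical
open Filter

/-- A finite history: an initial state together with a list of (action, next-state) steps. -/
abbrev Hist (S A : Type*) : Type _ := S × List (A × S)

/-- The last state of a history. -/
def Hist.last {S A : Type*} (π : Hist S A) : S :=
  (π.2.getLast?).elim π.1 Prod.snd

/-- A Markov decision process with finite state space `S` and finite action space `A`:
`P s a s'` is the transition probability, each state has at least one enabled action
(an action whose outgoing probabilities sum to `1`), and the outgoing probabilities
of a non-enabled action sum to `0`. -/
structure MDP (S A : Type*) [Fintype S] [Fintype A] where
  P : S → A → S → ℝ
  nonneg : ∀ s a s', 0 ≤ P s a s'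
  le_one : ∀ s a s', P s a s' ≤ 1
  sum_cases : ∀ s a, (∑ s', P s a s') = 1 ∨ (∑ s', P s a s') = 0
  exists_enabled : ∀ s, ∃ a, (∑ s', P s a s') = 1

namespace MDP

variable {S A : Type*} [Fintype S] [Fintype A]

/-- Action `a` is enabled in state `s`. -/
def enabled (M : MDP S A) (s : S) (a : A) : Prop := (∑ s', M.P s a s') = 1

/-- A state is absorbing if every enabled action loops on it with probability 1. -/
def Absorbing (M : MDP S A) (s : S) : Prop := ∀ a, M.enabled s a → M.P s a s = 1

end MDP

/-- A (history-dependent, randomized) scheduler for `M`: it assigns to every finite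
history a probability distribution over the actions enabled at its last state. -/
structure Scheduler {S A : Type*} [Fintype S] [Fintype A] (M : MDP S A) where
  choice : Hist S A → A → ℝ
  nonneg : ∀ π a, 0 ≤ choice π a
  sum_one : ∀ π, (∑ a, choice π a) = 1
  supp : ∀ π a, ¬ M.enabled (Hist.last π) a → choice π a = 0

namespace Scheduler

variable {S A : Type*} [Fintype S] [Fintype A] {M : MDP S A}

/-- A scheduler is memoryless if its choice only depends on the last state of the history. -/
def Memoryless (σ : Scheduler M) : Prop :=
  ∀ π π' : Hist S A, Hist.last π = Hist.last π' → σ.choice π = σ.choice π'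

/-- A scheduler is deterministic if all its choice probabilities are 0 or 1. -/
def Deterministic (σ : Scheduler M) : Prop :=
  ∀ π a, σ.choice π a = 0 ∨ σ.choice π a = 1

/-- Memoryless deterministic (MD) schedulers. -/
def MD (σ : Scheduler M) : Prop := σ.Memoryless ∧ σ.Deterministic

end Scheduler

/-- Probability of reaching the target set `T` within `n` steps, starting from history `π`,
under scheduler `σ`. -/
noncomputable def reachN {S A : Type*} [Fintype S] [Fintype A] (M : MDP S A)
    (σ : Scheduler M) (T : Set S) : ℕ → Hist S A → ℝ
  | 0, π => if Hist.last π ∈ T then 1 else 0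
  | n + 1, π =>
      if Hist.last π ∈ T then 1
      else ∑ a, σ.choice π a * ∑ s', M.P (Hist.last π) a s' *
        reachN M σ T n (π.1, π.2 ++ [(a, s')])

/-- `Pr M σ s T` is the probability of eventually reaching `T` from state `s` under
scheduler `σ`: the supremum of the step-bounded reachability probabilities. -/
noncomputable def Pr {S A : Type*} [Fintype S] [Fintype A] (M : MDP S A)
    (σ : Scheduler M) (s : S) (T : Set S) : ℝ :=
  ⨆ n : ℕ, reachN M σ T n (s, [])

section Aux

open Finset

variable {S A : Type*} [Fintype S] [Fintype A] (M : MDP S A)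

lemma MDP.P_eq_zero_of_not_enabled {s : S} {a : A} (h : ¬ M.enabled s a) (s' : S) :
    M.P s a s' = 0 := by
  rcases M.sum_cases s a with h1 | h0
  · exact absurd h1 h
  · have := Finset.sum_eq_zero_iff_of_nonneg (fun t _ => M.nonneg s a t) |>.mp h0
    exact this s' (Finset.mem_univ _)

/-- Enabled actions as a Finset. -/
noncomputable def ens (s : S) : Finset A := Finset.univ.filter (M.enabled s)

lemma ens_nonempty (s : S) : (ens M s).Nonempty := by
  obtain ⟨a, ha⟩ := M.exists_enabled s
  exact ⟨a, by simp [ens, MDP.enabled, ha]⟩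

lemma mem_ens {s : S} {a : A} : a ∈ ens M s ↔ M.enabled s a := by simp [ens]

/-- One-step expected value of `V` after taking action `a` in state `s`. -/
noncomputable def stp (a : A) (V : S → ℝ) (s : S) : ℝ := ∑ s', M.P s a s' * V s'

lemma stp_nonneg {V : S → ℝ} (hV : ∀ t, 0 ≤ V t) (a : A) (s : S) : 0 ≤ stp M a V s :=
  Finset.sum_nonneg fun t _ => mul_nonneg (M.nonneg s a t) (hV t)

lemma stp_mono {V W : S → ℝ} (h : ∀ t, V t ≤ W t) (a : A) (s : S) :
    stp M a V s ≤ stp M a W s :=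
  Finset.sum_le_sum fun t _ => mul_le_mul_of_nonneg_left (h t) (M.nonneg s a t)

lemma stp_le_of_le_one {V : S → ℝ} (hV : ∀ t, V t ≤ 1) (hV0 : ∀ t, 0 ≤ V t)
    (a : A) (s : S) : stp M a V s ≤ 1 := by
  calc stp M a V s ≤ ∑ s', M.P s a s' :=
        Finset.sum_le_sum fun t _ => by
          nlinarith [M.nonneg s a t, hV t, hV0 t]
    _ ≤ 1 := by rcases M.sum_cases s a with h | h <;> simp [h]

lemma stp_sum_one {s : S} {a : A} (ha : M.enabled s a) (c : ℝ) :
    stp M a (fun _ => c) s = c := by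
  simp only [stp, ← Finset.sum_mul]
  rw [ha, one_mul]

lemma Hist.last_nil (s : S) : Hist.last ((s, []) : Hist S A) = s := rfl

lemma Hist.last_append (π : Hist S A) (a : A) (s' : S) :
    Hist.last ((π.1, π.2 ++ [(a, s')]) : Hist S A) = s' := by
  simp [Hist.last, List.getLast?_append]

variable {T : Set S}

lemma reachN_nonneg (σ : Scheduler M) (T : Set S) :
    ∀ n (π : Hist S A), 0 ≤ reachN M σ T n π
  | 0, π => by unfold reachN; positivity
  | n+1, π => by
      unfold reachN
      split
      · norm_num
      · refine Finset.sum_nonneg fun a _ => mul_nonneg (σ.nonneg π a) ?_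
        exact Finset.sum_nonneg fun t _ =>
          mul_nonneg (M.nonneg _ a t) (reachN_nonneg σ T n _)

lemma reachN_le_one (σ : Scheduler M) (T : Set S) :
    ∀ n (π : Hist S A), reachN M σ T n π ≤ 1
  | 0, π => by unfold reachN; split <;> norm_num
  | n+1, π => by
      unfold reachN
      split
      · exact le_refl 1
      · calc ∑ a, σ.choice π a * ∑ s', M.P (Hist.last π) a s' *
              reachN M σ T n (π.1, π.2 ++ [(a, s')])
            ≤ ∑ a, σ.choice π a * 1 := by
              refine Finset.sum_le_sum fun a _ => ?_
              refine mul_le_mul_of_nonneg_left ?_ (σ.nonneg π a)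
              exact stp_le_of_le_one M (V := fun s' => reachN M σ T n (π.1, π.2 ++ [(a, s')]))
                (fun t => reachN_le_one σ T n _) (fun t => reachN_nonneg M σ T n _) a (Hist.last π)
          _ = 1 := by simp [σ.sum_one π]

end Aux

section Aux2

variable {S A : Type*} [Fintype S] [Fintype A] (M : MDP S A)

lemma reachN_mono (σ : Scheduler M) (T : Set S) :
    ∀ n (π : Hist S A), reachN M σ T n π ≤ reachN M σ T (n+1) π
  | 0, π => by
      show reachN M σ T 0 π ≤ reachN M σ T 1 π
      unfold reachN
      split
      · exact le_refl 1
      · refine Finset.sum_nonneg fun a _ => mul_nonneg (σ.nonneg π a) ?_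
        refine Finset.sum_nonneg fun t _ => mul_nonneg (M.nonneg _ a t) ?_
        exact reachN_nonneg M σ T 0 _
  | n+1, π => by
      show reachN M σ T (n+1) π ≤ reachN M σ T (n+2) π
      unfold reachN
      split
      · exact le_refl 1
      · refine Finset.sum_le_sum fun a _ => mul_le_mul_of_nonneg_left ?_ (σ.nonneg π a)
        refine Finset.sum_le_sum fun t _ => mul_le_mul_of_nonneg_left ?_ (M.nonneg _ a t)
        exact reachN_mono σ T n _

lemma reachN_mono' (σ : Scheduler M) (T : Set S) (π : Hist S A) :
    Monotone (fun n => reachN M σ T n π) :=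
  monotone_nat_of_le_succ fun n => reachN_mono M σ T n π

lemma reachN_bddAbove (σ : Scheduler M) (T : Set S) (π : Hist S A) :
    BddAbove (Set.range fun n => reachN M σ T n π) :=
  ⟨1, by rintro x ⟨n, rfl⟩; exact reachN_le_one M σ T n π⟩

lemma reachN_le_Pr (σ : Scheduler M) (T : Set S) (n : ℕ) (s : S) :
    reachN M σ T n (s, []) ≤ Pr M σ s T :=
  le_ciSup (reachN_bddAbove M σ T (s, [])) n

lemma Pr_nonneg (σ : Scheduler M) (T : Set S) (s : S) : 0 ≤ Pr M σ s T :=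
  (reachN_nonneg M σ T 0 _).trans (reachN_le_Pr M σ T 0 s)

lemma Pr_le_one (σ : Scheduler M) (T : Set S) (s : S) : Pr M σ s T ≤ 1 :=
  ciSup_le fun n => reachN_le_one M σ T n _

lemma Pr_eq_one_of_mem (σ : Scheduler M) (T : Set S) {s : S} (hs : s ∈ T) :
    Pr M σ s T = 1 := by
  refine le_antisymm (Pr_le_one M σ T s) ?_
  have : reachN M σ T 0 (s, []) = 1 := by unfold reachN; simp [Hist.last_nil, hs]
  rw [← this]; exact reachN_le_Pr M σ T 0 s

lemma tendsto_reachN (σ : Scheduler M) (T : Set S) (s : S) :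
    Filter.Tendsto (fun n => reachN M σ T n (s, [])) Filter.atTop (nhds (Pr M σ s T)) :=
  tendsto_atTop_ciSup (reachN_mono' M σ T _) (reachN_bddAbove M σ T _)

/-- Tendsto of a finite sup'. -/
lemma tendsto_finset_sup' {ι : Type*} (t : Finset ι) (ht : t.Nonempty)
    (f : ℕ → ι → ℝ) (g : ι → ℝ)
    (h : ∀ i ∈ t, Filter.Tendsto (fun n => f n i) Filter.atTop (nhds (g i))) :
    Filter.Tendsto (fun n => t.sup' ht (f n)) Filter.atTop (nhds (t.sup' ht g)) := by
  induction ht using Finset.Nonempty.cons_induction with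
  | singleton a => simpa using h a (by simp)
  | cons a u ha hu ih =>
      simp only [Finset.sup'_cons hu]
      exact Filter.Tendsto.max (h a (by simp)) (ih (fun i hi => h i (by simp [hi])))

lemma tendsto_finset_inf' {ι : Type*} (t : Finset ι) (ht : t.Nonempty)
    (f : ℕ → ι → ℝ) (g : ι → ℝ)
    (h : ∀ i ∈ t, Filter.Tendsto (fun n => f n i) Filter.atTop (nhds (g i))) :
    Filter.Tendsto (fun n => t.inf' ht (f n)) Filter.atTop (nhds (t.inf' ht g)) := by
  induction ht using Finset.Nonempty.cons_induction with
  | singleton a => simpa using h a (by simp)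
  | cons a u ha hu ih =>
      simp only [Finset.inf'_cons hu]
      exact Filter.Tendsto.min (h a (by simp)) (ih (fun i hi => h i (by simp [hi])))

lemma tendsto_stp (a : A) (s : S) (f : ℕ → S → ℝ) (g : S → ℝ)
    (h : ∀ t, Filter.Tendsto (fun n => f n t) Filter.atTop (nhds (g t))) :
    Filter.Tendsto (fun n => stp M a (f n) s) Filter.atTop (nhds (stp M a g s)) := by
  unfold stp
  exact tendsto_finset_sum _ fun t _ => ((h t).const_mul _)

end Aux2

section Aux3

variable {S A : Type*} [Fintype S] [Fintype A] (M : MDP S A) (T : Set S)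

lemma reachN_zero (σ : Scheduler M) (π : Hist S A) :
    reachN M σ T 0 π = if Hist.last π ∈ T then 1 else 0 := by unfold reachN; rfl

lemma reachN_succ (σ : Scheduler M) (n : ℕ) (π : Hist S A) :
    reachN M σ T (n+1) π = if Hist.last π ∈ T then 1
      else ∑ a, σ.choice π a * ∑ s', M.P (Hist.last π) a s' *
        reachN M σ T n (π.1, π.2 ++ [(a, s')]) := by cases n <;> rfl

noncomputable def Vseq : ℕ → S → ℝ
  | 0 => fun s => if s ∈ T then 1 else 0
  | n+1 => fun s => if s ∈ T then 1 else
      (ens M s).sup' (ens_nonempty M s) (fun a => stp M a (Vseq n) s)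

noncomputable def Wseq : ℕ → S → ℝ
  | 0 => fun s => if s ∈ T then 1 else 0
  | n+1 => fun s => if s ∈ T then 1 else
      (ens M s).inf' (ens_nonempty M s) (fun a => stp M a (Wseq n) s)

lemma Vseq_zero (s : S) : Vseq M T 0 s = if s ∈ T then 1 else 0 := by unfold Vseq; rfl

lemma Vseq_succ (n : ℕ) (s : S) : Vseq M T (n+1) s = if s ∈ T then 1 else
    (ens M s).sup' (ens_nonempty M s) (fun a => stp M a (Vseq M T n) s) := by
  cases n <;> rfl

lemma Wseq_zero (s : S) : Wseq M T 0 s = if s ∈ T then 1 else 0 := by unfold Wseq; rfl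

lemma Wseq_succ (n : ℕ) (s : S) : Wseq M T (n+1) s = if s ∈ T then 1 else
    (ens M s).inf' (ens_nonempty M s) (fun a => stp M a (Wseq M T n) s) := by
  cases n <;> rfl

lemma Vseq_nonneg : ∀ n s, 0 ≤ Vseq M T n s
  | 0, s => by rw [Vseq_zero]; positivity
  | n+1, s => by
      rw [Vseq_succ]; split
      · norm_num
      · obtain ⟨a, ha⟩ := ens_nonempty M s
        exact le_trans (stp_nonneg M (Vseq_nonneg n) a s)
          (Finset.le_sup' (fun a => stp M a (Vseq M T n) s) ha)

lemma Wseq_nonneg : ∀ n s, 0 ≤ Wseq M T n s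
  | 0, s => by rw [Wseq_zero]; positivity
  | n+1, s => by
      rw [Wseq_succ]; split
      · norm_num
      · exact Finset.le_inf' _ _ fun a _ => stp_nonneg M (Wseq_nonneg n) a s

lemma Vseq_le_one : ∀ n s, Vseq M T n s ≤ 1
  | 0, s => by rw [Vseq_zero]; split <;> norm_num
  | n+1, s => by
      rw [Vseq_succ]; split
      · exact le_refl 1
      · exact Finset.sup'_le _ _ fun a _ =>
          stp_le_of_le_one M (Vseq_le_one n) (Vseq_nonneg M T n) a s

lemma Wseq_le_one : ∀ n s, Wseq M T n s ≤ 1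
  | 0, s => by rw [Wseq_zero]; split <;> norm_num
  | n+1, s => by
      rw [Wseq_succ]; split
      · exact le_refl 1
      · obtain ⟨a, ha⟩ := ens_nonempty M s
        exact le_trans (Finset.inf'_le (fun a => stp M a (Wseq M T n) s) ha)
          (stp_le_of_le_one M (Wseq_le_one n) (Wseq_nonneg M T n) a s)

lemma Vseq_mem (n : ℕ) {s : S} (hs : s ∈ T) : Vseq M T n s = 1 := by
  cases n
  · rw [Vseq_zero]; simp [hs]
  · rw [Vseq_succ]; simp [hs]

lemma Wseq_mem (n : ℕ) {s : S} (hs : s ∈ T) : Wseq M T n s = 1 := by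
  cases n
  · rw [Wseq_zero]; simp [hs]
  · rw [Wseq_succ]; simp [hs]

lemma Vseq_mono : ∀ n s, Vseq M T n s ≤ Vseq M T (n+1) s
  | 0, s => by
      rw [Vseq_zero, Vseq_succ]
      split
      · exact le_refl 1
      · obtain ⟨a, ha⟩ := ens_nonempty M s
        exact le_trans (stp_nonneg M (Vseq_nonneg M T 0) a s)
          (Finset.le_sup' (fun a => stp M a (Vseq M T 0) s) ha)
  | n+1, s => by
      rw [Vseq_succ, Vseq_succ]
      split
      · exact le_refl 1
      · exact Finset.sup'_le _ _ fun a ha =>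
          le_trans (stp_mono M (fun t => Vseq_mono n t) a s)
            (Finset.le_sup' (fun a => stp M a (Vseq M T (n+1)) s) ha)

lemma Wseq_mono : ∀ n s, Wseq M T n s ≤ Wseq M T (n+1) s
  | 0, s => by
      rw [Wseq_zero, Wseq_succ]
      split
      · exact le_refl 1
      · exact Finset.le_inf' _ _ fun a _ => stp_nonneg M (Wseq_nonneg M T 0) a s
  | n+1, s => by
      rw [Wseq_succ, Wseq_succ]
      split
      · exact le_refl 1
      · exact Finset.le_inf' _ _ fun a ha =>
          le_trans (Finset.inf'_le (fun a => stp M a (Wseq M T n) s) ha)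
            (stp_mono M (fun t => Wseq_mono n t) a s)

noncomputable def Vmax (s : S) : ℝ := ⨆ n, Vseq M T n s
noncomputable def Wmin (s : S) : ℝ := ⨆ n, Wseq M T n s

lemma Vseq_bdd (s : S) : BddAbove (Set.range fun n => Vseq M T n s) :=
  ⟨1, by rintro x ⟨n, rfl⟩; exact Vseq_le_one M T n s⟩

lemma Wseq_bdd (s : S) : BddAbove (Set.range fun n => Wseq M T n s) :=
  ⟨1, by rintro x ⟨n, rfl⟩; exact Wseq_le_one M T n s⟩

lemma Vseq_le_Vmax (n : ℕ) (s : S) : Vseq M T n s ≤ Vmax M T s :=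
  le_ciSup (Vseq_bdd M T s) n

lemma Wseq_le_Wmin (n : ℕ) (s : S) : Wseq M T n s ≤ Wmin M T s :=
  le_ciSup (Wseq_bdd M T s) n

lemma Vmax_nonneg (s : S) : 0 ≤ Vmax M T s :=
  le_trans (Vseq_nonneg M T 0 s) (Vseq_le_Vmax M T 0 s)

lemma Wmin_nonneg (s : S) : 0 ≤ Wmin M T s :=
  le_trans (Wseq_nonneg M T 0 s) (Wseq_le_Wmin M T 0 s)

lemma Vmax_le_one (s : S) : Vmax M T s ≤ 1 := ciSup_le fun n => Vseq_le_one M T n s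
lemma Wmin_le_one (s : S) : Wmin M T s ≤ 1 := ciSup_le fun n => Wseq_le_one M T n s

lemma Vmax_mem {s : S} (hs : s ∈ T) : Vmax M T s = 1 :=
  le_antisymm (Vmax_le_one M T s)
    ((Vseq_mem M T 0 hs).symm.trans_le (Vseq_le_Vmax M T 0 s))

lemma Wmin_mem {s : S} (hs : s ∈ T) : Wmin M T s = 1 :=
  le_antisymm (Wmin_le_one M T s)
    ((Wseq_mem M T 0 hs).symm.trans_le (Wseq_le_Wmin M T 0 s))

lemma tendsto_Vseq (s : S) :
    Filter.Tendsto (fun n => Vseq M T n s) Filter.atTop (nhds (Vmax M T s)) :=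
  tendsto_atTop_ciSup (monotone_nat_of_le_succ fun n => Vseq_mono M T n s) (Vseq_bdd M T s)

lemma tendsto_Wseq (s : S) :
    Filter.Tendsto (fun n => Wseq M T n s) Filter.atTop (nhds (Wmin M T s)) :=
  tendsto_atTop_ciSup (monotone_nat_of_le_succ fun n => Wseq_mono M T n s) (Wseq_bdd M T s)

/-- the "≤" half of the fixed-point property of `Vmax`. -/
lemma stp_Vmax_le {s : S} {a : A} (ha : M.enabled s a) (hs : s ∉ T) :
    stp M a (Vmax M T) s ≤ Vmax M T s := by
  have h1 : ∀ n, stp M a (Vseq M T n) s ≤ Vmax M T s := by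
    intro n
    have h2 : stp M a (Vseq M T n) s ≤ Vseq M T (n+1) s := by
      rw [Vseq_succ, if_neg hs]
      exact Finset.le_sup' (fun a => stp M a (Vseq M T n) s) ((mem_ens M).2 ha)
    exact h2.trans (Vseq_le_Vmax M T (n+1) s)
  exact le_of_tendsto (tendsto_stp M a s _ _ (fun t => tendsto_Vseq M T t))
    (Filter.Eventually.of_forall h1)

/-- full fixed point for `Wmin`. -/
lemma Wmin_fixed {s : S} (hs : s ∉ T) :
    Wmin M T s = (ens M s).inf' (ens_nonempty M s) (fun a => stp M a (Wmin M T) s) := by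
  have htd : Filter.Tendsto (fun n => Wseq M T (n+1) s) Filter.atTop (nhds (Wmin M T s)) :=
    (tendsto_Wseq M T s).comp (Filter.tendsto_add_atTop_nat 1)
  have htd2 : Filter.Tendsto (fun n => Wseq M T (n+1) s) Filter.atTop
      (nhds ((ens M s).inf' (ens_nonempty M s) (fun a => stp M a (Wmin M T) s))) := by
    have heq : (fun n => Wseq M T (n+1) s)
        = fun n => (ens M s).inf' (ens_nonempty M s) (fun a => stp M a (Wseq M T n) s) := by
      funext n; rw [Wseq_succ, if_neg hs]
    rw [heq]
    exact tendsto_finset_inf' _ _ _ _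
      (fun a _ => tendsto_stp M a s _ _ (fun t => tendsto_Wseq M T t))
  exact tendsto_nhds_unique htd htd2

/-- minimality of `Vmax` among nonnegative pre-fixed points. -/
lemma Vmax_le_prefixed (W : S → ℝ) (hW0 : ∀ s, 0 ≤ W s)
    (hWT : ∀ s ∈ T, (1:ℝ) ≤ W s)
    (hWF : ∀ s ∉ T, ∀ a, M.enabled s a → stp M a W s ≤ W s) :
    ∀ s, Vmax M T s ≤ W s := by
  have key : ∀ n s, Vseq M T n s ≤ W s := by
    intro n
    induction n with
    | zero =>
        intro s; rw [Vseq_zero]; split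
        · exact hWT s ‹_›
        · exact hW0 s
    | succ n ih =>
        intro s
        rw [Vseq_succ]; split
        · exact hWT s ‹_›
        · refine Finset.sup'_le _ _ fun a ha => ?_
          exact le_trans (stp_mono M ih a s) (hWF s ‹_› a ((mem_ens M).1 ha))
  exact fun s => ciSup_le fun n => key n s

/-- Any scheduler's `n`-step value is at most `Vseq n`. -/
lemma reachN_le_Vseq (σ : Scheduler M) :
    ∀ n (π : Hist S A), reachN M σ T n π ≤ Vseq M T n (Hist.last π)
  | 0, π => by rw [reachN_zero, Vseq_zero]
  | n+1, π => by
      rw [reachN_succ, Vseq_succ]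
      split
      · exact le_refl 1
      · calc ∑ a, σ.choice π a * ∑ s', M.P (Hist.last π) a s' *
              reachN M σ T n (π.1, π.2 ++ [(a, s')])
            ≤ ∑ a, σ.choice π a * ((ens M (Hist.last π)).sup' (ens_nonempty M _)
                (fun a => stp M a (Vseq M T n) (Hist.last π))) := by
              refine Finset.sum_le_sum fun a _ => ?_
              by_cases hen : M.enabled (Hist.last π) a
              · refine mul_le_mul_of_nonneg_left ?_ (σ.nonneg π a)
                calc (∑ s', M.P (Hist.last π) a s' * reachN M σ T n (π.1, π.2 ++ [(a, s')]))
                    ≤ stp M a (Vseq M T n) (Hist.last π) := by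
                      refine Finset.sum_le_sum fun t _ => ?_
                      refine mul_le_mul_of_nonneg_left ?_ (M.nonneg _ a t)
                      have := reachN_le_Vseq σ n (π.1, π.2 ++ [(a, t)])
                      rwa [Hist.last_append] at this
                  _ ≤ _ := Finset.le_sup' (fun a => stp M a (Vseq M T n) (Hist.last π))
                      ((mem_ens M).2 hen)
              · rw [σ.supp π a hen, zero_mul, zero_mul]
          _ = _ := by rw [← Finset.sum_mul, σ.sum_one π, one_mul]

/-- Any scheduler's `n`-step value is at least `Wseq n`. -/
lemma Wseq_le_reachN (σ : Scheduler M) :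
    ∀ n (π : Hist S A), Wseq M T n (Hist.last π) ≤ reachN M σ T n π
  | 0, π => by rw [reachN_zero, Wseq_zero]
  | n+1, π => by
      rw [reachN_succ, Wseq_succ]
      split
      · exact le_refl 1
      · calc (ens M (Hist.last π)).inf' (ens_nonempty M _)
              (fun a => stp M a (Wseq M T n) (Hist.last π))
            = ∑ a, σ.choice π a * ((ens M (Hist.last π)).inf' (ens_nonempty M _)
                (fun a => stp M a (Wseq M T n) (Hist.last π))) := by
              rw [← Finset.sum_mul, σ.sum_one π, one_mul]
          _ ≤ ∑ a, σ.choice π a * ∑ s', M.P (Hist.last π) a s' *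
              reachN M σ T n (π.1, π.2 ++ [(a, s')]) := by
              refine Finset.sum_le_sum fun a _ => ?_
              by_cases hen : M.enabled (Hist.last π) a
              · refine mul_le_mul_of_nonneg_left ?_ (σ.nonneg π a)
                calc (ens M (Hist.last π)).inf' (ens_nonempty M _)
                      (fun a => stp M a (Wseq M T n) (Hist.last π))
                    ≤ stp M a (Wseq M T n) (Hist.last π) :=
                      Finset.inf'_le (fun a => stp M a (Wseq M T n) (Hist.last π))
                        ((mem_ens M).2 hen)
                  _ ≤ ∑ s', M.P (Hist.last π) a s' *
                      reachN M σ T n (π.1, π.2 ++ [(a, s')]) := by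
                      refine Finset.sum_le_sum fun t _ => ?_
                      refine mul_le_mul_of_nonneg_left ?_ (M.nonneg _ a t)
                      have := Wseq_le_reachN σ n (π.1, π.2 ++ [(a, t)])
                      rwa [Hist.last_append] at this
              · rw [σ.supp π a hen, zero_mul, zero_mul]

lemma Pr_le_Vmax (σ : Scheduler M) (s : S) : Pr M σ s T ≤ Vmax M T s := by
  refine ciSup_le fun n => ?_
  have := reachN_le_Vseq M T σ n (s, [])
  rw [Hist.last_nil] at this
  exact this.trans (Vseq_le_Vmax M T n s)

lemma Wmin_le_Pr (σ : Scheduler M) (s : S) : Wmin M T s ≤ Pr M σ s T := by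
  have h : ∀ n, Wseq M T n s ≤ Pr M σ s T := by
    intro n
    have := Wseq_le_reachN M T σ n (s, [])
    rw [Hist.last_nil] at this
    exact this.trans (reachN_le_Pr M σ T n s)
  exact ciSup_le h

end Aux3

section Aux4

variable {S A : Type*} [Fintype S] [Fintype A] (M : MDP S A) (T : Set S)

/-- The MD scheduler induced by a choice function. -/
noncomputable def mdSched (c : S → A) (hc : ∀ s, M.enabled s (c s)) : Scheduler M where
  choice π a := if a = c (Hist.last π) then 1 else 0
  nonneg π a := by positivity
  sum_one π := by simp
  supp π a h := by
    have : a ≠ c (Hist.last π) := fun he => h (he ▸ hc (Hist.last π))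
    simp [this]

lemma mdSched_MD (c : S → A) (hc : ∀ s, M.enabled s (c s)) : (mdSched M c hc).MD := by
  constructor
  · intro π π' h
    funext a
    simp only [mdSched, h]
  · intro π a
    by_cases h : a = c (Hist.last π) <;> simp [mdSched, h]

/-- The `n`-step value of an MD scheduler depends only on the last state. -/
lemma reachN_mdSched (c : S → A) (hc : ∀ s, M.enabled s (c s)) :
    ∀ n (π : Hist S A),
      reachN M (mdSched M c hc) T n π = reachN M (mdSched M c hc) T n (Hist.last π, [])
  | 0, π => by rw [reachN_zero, reachN_zero, Hist.last_nil]
  | n+1, π => by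
      rw [reachN_succ, reachN_succ, Hist.last_nil]
      split
      · rfl
      · refine Finset.sum_congr rfl fun a _ => ?_
        have hch : (mdSched M c hc).choice π a
            = (mdSched M c hc).choice (Hist.last π, []) a := by
          simp only [mdSched, Hist.last_nil]
          congr
        rw [hch]
        congr 1
        refine Finset.sum_congr rfl fun t _ => ?_
        congr 1
        rw [reachN_mdSched c hc n (π.1, π.2 ++ [(a, t)]),
            reachN_mdSched c hc n (((Hist.last π, []) : Hist S A).1,
              ((Hist.last π, []) : Hist S A).2 ++ [(a, t)]),
            Hist.last_append, Hist.last_append]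

end Aux4

section Aux4b

variable {S A : Type*} [Fintype S] [Fintype A] (M : MDP S A) (T : Set S)
variable (c : S → A) (hc : ∀ s, M.enabled s (c s))

lemma reachN_mdSched_succ {s : S} (hs : s ∉ T) (n : ℕ) :
    reachN M (mdSched M c hc) T (n+1) (s, [])
      = stp M (c s) (fun t => reachN M (mdSched M c hc) T n (t, [])) s := by
  rw [reachN_succ, Hist.last_nil, if_neg hs]
  have hch : ∀ a, (mdSched M c hc).choice ((s, []) : Hist S A) a
      = if a = c s then 1 else 0 := by
    intro a; simp only [mdSched, Hist.last_nil]
    congr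
  have hre : ∀ (a : A) (t : S),
      reachN M (mdSched M c hc) T n (((s, []) : Hist S A).1, ((s, []) : Hist S A).2 ++ [(a, t)])
        = reachN M (mdSched M c hc) T n (t, []) := by
    intro a t
    rw [reachN_mdSched M T c hc n, Hist.last_append]
  calc (∑ a, (mdSched M c hc).choice ((s, []) : Hist S A) a *
        ∑ s', M.P (Hist.last ((s, []) : Hist S A)) a s' *
          reachN M (mdSched M c hc) T n (((s, []) : Hist S A).1,
            ((s, []) : Hist S A).2 ++ [(a, s')]))
      = ∑ a, (if a = c s then 1 else 0) *
          ∑ s', M.P s a s' * reachN M (mdSched M c hc) T n (s', []) := by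
        refine Finset.sum_congr rfl fun a _ => ?_
        rw [hch a]
        congr 1
        refine Finset.sum_congr rfl fun t _ => ?_
        rw [Hist.last_nil, hre a t]
    _ = stp M (c s) (fun t => reachN M (mdSched M c hc) T n (t, [])) s := by
        simp only [ite_mul, one_mul, zero_mul]
        rw [Finset.sum_ite_eq' Finset.univ (c s)
          (fun a => ∑ s', M.P s a s' * reachN M (mdSched M c hc) T n (s', []))]
        simp [stp]


lemma Pr_mdSched_fixed {s : S} (hs : s ∉ T) :
    Pr M (mdSched M c hc) s T = stp M (c s) (fun t => Pr M (mdSched M c hc) t T) s := by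
  have h1 : Filter.Tendsto (fun n => reachN M (mdSched M c hc) T (n+1) (s, []))
      Filter.atTop (nhds (Pr M (mdSched M c hc) s T)) :=
    (tendsto_reachN M (mdSched M c hc) T s).comp (Filter.tendsto_add_atTop_nat 1)
  have h2 : Filter.Tendsto (fun n => reachN M (mdSched M c hc) T (n+1) (s, []))
      Filter.atTop (nhds (stp M (c s) (fun t => Pr M (mdSched M c hc) t T) s)) := by
    have heq : (fun n => reachN M (mdSched M c hc) T (n+1) (s, []))
        = fun n => stp M (c s) (fun t => reachN M (mdSched M c hc) T n (t, [])) s := by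
      funext n; exact reachN_mdSched_succ M T c hc hs n
    rw [heq]
    exact tendsto_stp M (c s) s _ _ (fun t => tendsto_reachN M (mdSched M c hc) T t)
  exact tendsto_nhds_unique h1 h2

end Aux4b

section Aux5

variable {S A : Type*} [Fintype S] [Fintype A] (M : MDP S A) (T : Set S)

lemma stp_sub (a : A) (V W : S → ℝ) (s : S) :
    stp M a (fun t => V t - W t) s = stp M a V s - stp M a W s := by
  simp only [stp, mul_sub, Finset.sum_sub_distrib]

/-- Rank predicate: `s` can reach (T or a zero-value state) in `≤ k` steps along
optimal transitions. -/
def OkM : ℕ → S → Prop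
  | 0 => fun s => s ∈ T ∨ Vmax M T s = 0
  | k+1 => fun s => OkM k s ∨ ∃ a, M.enabled s a ∧ stp M a (Vmax M T) s = Vmax M T s ∧
      ∃ u, 0 < M.P s a u ∧ OkM k u

lemma OkM_zero (s : S) : OkM M T 0 s ↔ (s ∈ T ∨ Vmax M T s = 0) := Iff.rfl

lemma OkM_succ (k : ℕ) (s : S) : OkM M T (k+1) s ↔ (OkM M T k s ∨
    ∃ a, M.enabled s a ∧ stp M a (Vmax M T) s = Vmax M T s ∧
      ∃ u, 0 < M.P s a u ∧ OkM M T k u) := Iff.rfl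

lemma okm_all : ∀ s, ∃ k, OkM M T k s := by
  by_contra hcon
  push_neg at hcon
  obtain ⟨s₀, hs₀⟩ := hcon
  classical
  set C : Finset S := Finset.univ.filter (fun s => ∀ k, ¬ OkM M T k s) with hC
  have hmemC : ∀ s : S, s ∈ C ↔ ∀ k, ¬ OkM M T k s := by
    intro s; simp [hC]
  have hs₀C : s₀ ∈ C := (hmemC s₀).2 hs₀
  have hCT : ∀ s ∈ C, s ∉ T := by
    intro s hsC hsT
    exact (hmemC s).1 hsC 0 (Or.inl hsT)
  have hC0 : ∀ s ∈ C, 0 < Vmax M T s := by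
    intro s hsC
    rcases lt_or_eq_of_le (Vmax_nonneg M T s) with h | h
    · exact h
    · exact absurd (Or.inr h.symm) ((hmemC s).1 hsC 0)
  have hCC : ∀ s ∈ C, ∀ a, M.enabled s a → stp M a (Vmax M T) s = Vmax M T s →
      ∀ u, 0 < M.P s a u → u ∈ C := by
    intro s hsC a hen hopt u hPu
    by_contra huC
    have hex : ∃ k, OkM M T k u := by
      by_contra h2; push_neg at h2
      exact huC ((hmemC u).2 h2)
    obtain ⟨k, hk⟩ := hex
    exact (hmemC s).1 hsC (k+1) (Or.inr ⟨a, hen, hopt, u, hPu, hk⟩)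
  -- the epsilon
  set G : Finset (S × A) := (C ×ˢ Finset.univ).filter
    (fun p => M.enabled p.1 p.2 ∧ stp M p.2 (Vmax M T) p.1 < Vmax M T p.1) with hG
  set E : Finset ℝ := C.image (Vmax M T) ∪
      G.image (fun p => Vmax M T p.1 - stp M p.2 (Vmax M T) p.1) with hE
  have hEne : E.Nonempty := by
    refine ⟨Vmax M T s₀, ?_⟩
    simp only [hE, Finset.mem_union, Finset.mem_image]
    exact Or.inl ⟨s₀, hs₀C, rfl⟩
  set ε : ℝ := E.min' hEne with hεdef
  have hEpos : ∀ x ∈ E, 0 < x := by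
    intro x hx
    simp only [hE, Finset.mem_union, Finset.mem_image] at hx
    rcases hx with ⟨t, htC, rfl⟩ | ⟨p, hpG, rfl⟩
    · exact hC0 t htC
    · simp only [hG, Finset.mem_filter] at hpG
      linarith [hpG.2.2]
  have hε0 : 0 < ε := hEpos _ (E.min'_mem hEne)
  have hεle : ∀ x ∈ E, ε ≤ x := fun x hx => E.min'_le x hx
  -- the smaller pre-fixed point
  set W : S → ℝ := fun s => Vmax M T s - (if s ∈ C then ε else 0) with hW
  have hεVmax : ∀ s ∈ C, ε ≤ Vmax M T s := by
    intro s hsC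
    refine hεle _ ?_
    simp only [hE, Finset.mem_union, Finset.mem_image]
    exact Or.inl ⟨s, hsC, rfl⟩
  have hW0 : ∀ s, 0 ≤ W s := by
    intro s
    simp only [hW]
    split
    · linarith [hεVmax s ‹_›]
    · linarith [Vmax_nonneg M T s]
  have hWT : ∀ s ∈ T, (1:ℝ) ≤ W s := by
    intro s hsT
    have : s ∉ C := fun h => hCT s h hsT
    simp only [hW, if_neg this, Vmax_mem M T hsT, sub_zero, le_refl]
  have hWF : ∀ s ∉ T, ∀ a, M.enabled s a → stp M a W s ≤ W s := by
    intro s hsT a hen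
    have hsplit : stp M a W s = stp M a (Vmax M T) s
        - ∑ u, M.P s a u * (if u ∈ C then ε else 0) := by
      simp only [hW, stp, mul_sub, Finset.sum_sub_distrib]
    have hnn : 0 ≤ ∑ u, M.P s a u * (if u ∈ C then ε else 0) := by
      refine Finset.sum_nonneg fun u _ => mul_nonneg (M.nonneg s a u) ?_
      split <;> [exact le_of_lt hε0; exact le_refl 0]
    by_cases hsC : s ∈ C
    · by_cases hopt : stp M a (Vmax M T) s = Vmax M T s
      · -- optimal action: all mass stays in C
        have hsum : ∑ u, M.P s a u * (if u ∈ C then ε else 0) = ε := by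
          have : ∀ u : S, M.P s a u * (if u ∈ C then ε else 0) = M.P s a u * ε := by
            intro u
            by_cases huC : u ∈ C
            · rw [if_pos huC]
            · rw [if_neg huC]
              have hP0 : M.P s a u = 0 := by
                rcases lt_or_eq_of_le (M.nonneg s a u) with h | h
                · exact absurd (hCC s hsC a hen hopt u h) huC
                · exact h.symm
              rw [hP0]; ring
          rw [Finset.sum_congr rfl (fun u _ => this u), ← Finset.sum_mul, hen, one_mul]
        rw [hsplit, hsum, hopt]
        simp only [hW, if_pos hsC, le_refl]
      · -- suboptimal action: gap at least ε
        have hlt : stp M a (Vmax M T) s < Vmax M T s :=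
          lt_of_le_of_ne (stp_Vmax_le M T hen hsT) hopt
        have hgap : ε ≤ Vmax M T s - stp M a (Vmax M T) s := by
          refine hεle _ ?_
          simp only [hE, Finset.mem_union, Finset.mem_image]
          refine Or.inr ⟨(s, a), ?_, rfl⟩
          simp only [hG, Finset.mem_filter, Finset.mem_product]
          exact ⟨⟨hsC, Finset.mem_univ a⟩, hen, hlt⟩
        rw [hsplit]
        simp only [hW, if_pos hsC]
        linarith
    · rw [hsplit]
      simp only [hW, if_neg hsC, sub_zero]
      linarith [stp_Vmax_le M T hen hsT]
  have hle := Vmax_le_prefixed M T W hW0 hWT hWF s₀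
  simp only [hW, if_pos hs₀C] at hle
  linarith

/-- rank of a state. -/
noncomputable def rnk (s : S) : ℕ := Nat.find (okm_all M T s)

lemma exists_greedy_max : ∀ s : S, ∃ a, M.enabled s a ∧
    (s ∉ T → stp M a (Vmax M T) s = Vmax M T s) ∧
    (s ∉ T → 0 < Vmax M T s → ∃ u, 0 < M.P s a u ∧ rnk M T u < rnk M T s) := by
  intro s
  by_cases hsT : s ∈ T
  · obtain ⟨a, ha⟩ := M.exists_enabled s
    exact ⟨a, ha, fun h => absurd hsT h, fun h => absurd hsT h⟩
  · by_cases hV : Vmax M T s = 0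
    · obtain ⟨a, ha⟩ := M.exists_enabled s
      refine ⟨a, ha, fun _ => ?_, fun _ h0 => absurd hV (ne_of_gt h0)⟩
      refine le_antisymm (stp_Vmax_le M T ha hsT) ?_
      rw [hV]
      exact stp_nonneg M (Vmax_nonneg M T) a s
    · have hVpos : 0 < Vmax M T s := lt_of_le_of_ne (Vmax_nonneg M T s) (Ne.symm hV)
      have hspec : OkM M T (rnk M T s) s := Nat.find_spec (okm_all M T s)
      have hne0 : rnk M T s ≠ 0 := by
        intro h0
        rw [h0] at hspec
        rcases hspec with h | h
        · exact hsT h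
        · exact hV h
      obtain ⟨k, hk⟩ := Nat.exists_eq_succ_of_ne_zero hne0
      rw [hk] at hspec
      rcases hspec with h | ⟨a, hen, hopt, u, hPu, hOku⟩
      · have := Nat.find_min' (okm_all M T s) h
        have hkr : rnk M T s ≤ k := this
        omega
      · refine ⟨a, hen, fun _ => hopt, fun _ _ => ⟨u, hPu, ?_⟩⟩
        have hru : rnk M T u ≤ k := Nat.find_min' (okm_all M T u) hOku
        omega

end Aux5

section Aux6

variable {S A : Type*} [Fintype S] [Fintype A] [Nonempty S] (M : MDP S A) (T : Set S)

/-- There is an MD scheduler maximizing reachability from every state simultaneously. -/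
lemma exists_max_MD : ∃ σmax : Scheduler M, σmax.MD ∧
    ∀ (s : S) (σ : Scheduler M), Pr M σ s T ≤ Pr M σmax s T := by
  classical
  obtain ⟨c, hc⟩ := Classical.axiomOfChoice (exists_greedy_max M T)
  have hen : ∀ s, M.enabled s (c s) := fun s => (hc s).1
  have hopt : ∀ s, s ∉ T → stp M (c s) (Vmax M T) s = Vmax M T s := fun s => (hc s).2.1
  have hrank : ∀ s, s ∉ T → 0 < Vmax M T s →
      ∃ u, 0 < M.P s (c s) u ∧ rnk M T u < rnk M T s := fun s => (hc s).2.2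
  set σm : Scheduler M := mdSched M c hen with hσm
  refine ⟨σm, mdSched_MD M c hen, ?_⟩
  -- it suffices to show `Pr σm = Vmax`
  suffices hkey : ∀ s, Pr M σm s T = Vmax M T s by
    intro s σ
    rw [hkey s]
    exact Pr_le_Vmax M T σ s
  -- the deficiency function
  set g : S → ℝ := fun s => Vmax M T s - Pr M σm s T with hg
  have hg0 : ∀ s, 0 ≤ g s := fun s => by
    simp only [hg]; linarith [Pr_le_Vmax M T σm s]
  obtain ⟨s₀, -, hs₀max⟩ := Finset.exists_max_image (Finset.univ : Finset S) g
    Finset.univ_nonempty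
  set c₀ : ℝ := g s₀ with hc₀
  suffices hc₀le : c₀ ≤ 0 by
    intro s
    have h1 : g s ≤ c₀ := hs₀max s (Finset.mem_univ s)
    have := hg0 s
    have : g s = 0 := le_antisymm (h1.trans hc₀le) (hg0 s)
    simp only [hg] at this
    linarith
  by_contra hpos
  push_neg at hpos
  -- minimal-rank state where the deficiency is maximal
  set U : Finset S := Finset.univ.filter (fun s => g s = c₀) with hU
  have hUne : U.Nonempty := ⟨s₀, by simp [hU, hc₀]⟩
  obtain ⟨st, hstU, hstmin⟩ := Finset.exists_min_image U (rnk M T) hUne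
  have hgst : g st = c₀ := show g st = c₀ from (Finset.mem_filter.1 hstU).2
  have hstT : st ∉ T := by
    intro hmem
    have h3 : g st = 0 := by
      show Vmax M T st - Pr M σm st T = 0
      rw [Vmax_mem M T hmem, Pr_eq_one_of_mem M σm T hmem]
      ring
    linarith
  have hVst : 0 < Vmax M T st := by
    have h2 : 0 ≤ Pr M σm st T := Pr_nonneg M σm T st
    have h3 : Vmax M T st = g st + Pr M σm st T := by
      show Vmax M T st = (Vmax M T st - Pr M σm st T) + Pr M σm st T
      ring
    rw [h3, hgst]
    linarith
  obtain ⟨u, hPu, hranku⟩ := hrank st hstT hVst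
  -- the harmonic equation for g at st
  have heq : g st = stp M (c st) g st := by
    show Vmax M T st - Pr M σm st T
      = stp M (c st) (fun t => Vmax M T t - Pr M σm t T) st
    rw [stp_sub]
    have h1 := Pr_mdSched_fixed M T c hen (s := st) hstT
    rw [← hopt st hstT, hσm, h1]
  -- g u = c₀
  have hgu : g u = c₀ := by
    by_contra hne
    have hlt : g u < c₀ := lt_of_le_of_ne (hs₀max u (Finset.mem_univ u)) hne
    have hstrict : stp M (c st) g st < stp M (c st) (fun _ => c₀) st := by
      refine Finset.sum_lt_sum (fun t _ => ?_) ⟨u, Finset.mem_univ u, ?_⟩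
      · exact mul_le_mul_of_nonneg_left (hs₀max t (Finset.mem_univ t)) (M.nonneg st (c st) t)
      · exact mul_lt_mul_of_pos_left hlt hPu
    rw [stp_sum_one M (hen st) c₀] at hstrict
    rw [← heq, hgst] at hstrict
    exact lt_irrefl _ hstrict
  have huU : u ∈ U := Finset.mem_filter.2 ⟨Finset.mem_univ u, hgu⟩
  exact absurd (hstmin u huU) (by omega)

/-- Greedy choice for the minimum. -/
lemma exists_greedy_min : ∀ s : S, ∃ a, M.enabled s a ∧
    (s ∉ T → stp M a (Wmin M T) s = Wmin M T s) := by
  intro s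
  by_cases hsT : s ∈ T
  · obtain ⟨a, ha⟩ := M.exists_enabled s
    exact ⟨a, ha, fun h => absurd hsT h⟩
  · obtain ⟨b, hbmem, hbeq⟩ := Finset.exists_mem_eq_inf' (ens_nonempty M s)
      (fun a => stp M a (Wmin M T) s)
    refine ⟨b, (mem_ens M).1 hbmem, fun _ => ?_⟩
    rw [← hbeq, ← Wmin_fixed M T hsT]

/-- There is an MD scheduler minimizing reachability from every state simultaneously. -/
lemma exists_min_MD : ∃ σmin : Scheduler M, σmin.MD ∧
    ∀ (s : S) (σ : Scheduler M), Pr M σmin s T ≤ Pr M σ s T := by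
  classical
  obtain ⟨c, hc⟩ := Classical.axiomOfChoice (exists_greedy_min M T)
  have hen : ∀ s, M.enabled s (c s) := fun s => (hc s).1
  have hopt : ∀ s, s ∉ T → stp M (c s) (Wmin M T) s = Wmin M T s := fun s => (hc s).2
  refine ⟨mdSched M c hen, mdSched_MD M c hen, ?_⟩
  suffices hkey : ∀ s, Pr M (mdSched M c hen) s T ≤ Wmin M T s by
    intro s σ
    exact (hkey s).trans (Wmin_le_Pr M T σ s)
  -- n-step bound
  have hbound : ∀ n (s : S), reachN M (mdSched M c hen) T n (s, []) ≤ Wmin M T s := by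
    intro n
    induction n with
    | zero =>
        intro s
        rw [reachN_zero, Hist.last_nil]
        split
        · exact (Wmin_mem M T ‹_›).ge
        · exact Wmin_nonneg M T s
    | succ n ih =>
        intro s
        by_cases hsT : s ∈ T
        · exact le_trans (reachN_le_one M (mdSched M c hen) T (n+1) (s, []))
            (Wmin_mem M T hsT).ge
        · rw [reachN_mdSched_succ M T c hen hsT n]
          exact le_trans (stp_mono M ih (c s) s) (hopt s hsT).le
  exact fun s => ciSup_le fun n => hbound n s

end Aux6


/-- When each probability operator has its own scheduler quantifier
(`n = m`), MD schedulers suffice for inequalities (`≥`, `>`) and for disequalities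
(`|·| > ε`). -/
theorem MD_suffice_independent_quantifiers
    {S A : Type*} [Fintype S] [Fintype A] [Nonempty S] [Nonempty A]
    (M : MDP S A) {m : ℕ} (hm : 1 ≤ m)
    (q : Fin m → ℚ) (qf : ℚ) (s : Fin m → S) (T : Fin m → Set S) :
    ((∃ σ : Fin m → Scheduler M,
        (∑ i, (q i : ℝ) * Pr M (σ i) (s i) (T i)) ≥ (qf : ℝ)) ↔
      (∃ σ : Fin m → Scheduler M, (∀ i, (σ i).MD) ∧
        (∑ i, (q i : ℝ) * Pr M (σ i) (s i) (T i)) ≥ (qf : ℝ))) ∧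
    ((∃ σ : Fin m → Scheduler M,
        (∑ i, (q i : ℝ) * Pr M (σ i) (s i) (T i)) > (qf : ℝ)) ↔
      (∃ σ : Fin m → Scheduler M, (∀ i, (σ i).MD) ∧
        (∑ i, (q i : ℝ) * Pr M (σ i) (s i) (T i)) > (qf : ℝ))) ∧
    (∀ ε : ℝ, 0 ≤ ε →
      ((∃ σ : Fin m → Scheduler M,
          |(∑ i, (q i : ℝ) * Pr M (σ i) (s i) (T i)) - (qf : ℝ)| > ε) ↔
        (∃ σ : Fin m → Scheduler M, (∀ i, (σ i).MD) ∧
          |(∑ i, (q i : ℝ) * Pr M (σ i) (s i) (T i)) - (qf : ℝ)| > ε))) := by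
  classical
  choose σp hp1 hp2 using fun i : Fin m => exists_max_MD M (T i)
  choose σn hn1 hn2 using fun i : Fin m => exists_min_MD M (T i)
  set best : Fin m → Scheduler M := fun i => if 0 ≤ (q i : ℝ) then σp i else σn i with hbest
  set worst : Fin m → Scheduler M := fun i => if 0 ≤ (q i : ℝ) then σn i else σp i with hworst
  have hbMD : ∀ i, (best i).MD := by
    intro i
    by_cases h : 0 ≤ (q i : ℝ)
    · simp only [hbest, if_pos h]; exact hp1 i
    · simp only [hbest, if_neg h]; exact hn1 i
  have hwMD : ∀ i, (worst i).MD := by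
    intro i
    by_cases h : 0 ≤ (q i : ℝ)
    · simp only [hworst, if_pos h]; exact hn1 i
    · simp only [hworst, if_neg h]; exact hp1 i
  have hb : ∀ σ : Fin m → Scheduler M,
      (∑ i, (q i : ℝ) * Pr M (σ i) (s i) (T i))
        ≤ ∑ i, (q i : ℝ) * Pr M (best i) (s i) (T i) := by
    intro σ
    refine Finset.sum_le_sum fun i _ => ?_
    by_cases h : 0 ≤ (q i : ℝ)
    · simp only [hbest, if_pos h]
      exact mul_le_mul_of_nonneg_left (hp2 i (s i) (σ i)) h
    · simp only [hbest, if_neg h]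
      push_neg at h
      exact mul_le_mul_of_nonpos_left (hn2 i (s i) (σ i)) h.le
  have hw : ∀ σ : Fin m → Scheduler M,
      (∑ i, (q i : ℝ) * Pr M (worst i) (s i) (T i))
        ≤ ∑ i, (q i : ℝ) * Pr M (σ i) (s i) (T i) := by
    intro σ
    refine Finset.sum_le_sum fun i _ => ?_
    by_cases h : 0 ≤ (q i : ℝ)
    · simp only [hworst, if_pos h]
      exact mul_le_mul_of_nonneg_left (hn2 i (s i) (σ i)) h
    · simp only [hworst, if_neg h]
      push_neg at h
      exact mul_le_mul_of_nonpos_left (hp2 i (s i) (σ i)) h.le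
  refine ⟨⟨?_, ?_⟩, ⟨?_, ?_⟩, ?_⟩
  · rintro ⟨σ, hσ⟩
    exact ⟨best, hbMD, le_trans hσ (hb σ)⟩
  · rintro ⟨σ, -, hσ⟩
    exact ⟨σ, hσ⟩
  · rintro ⟨σ, hσ⟩
    exact ⟨best, hbMD, lt_of_lt_of_le hσ (hb σ)⟩
  · rintro ⟨σ, -, hσ⟩
    exact ⟨σ, hσ⟩
  · intro ε hε
    constructor
    · rintro ⟨σ, hσ⟩
      rcases lt_abs.mp hσ with h | h
      · refine ⟨best, hbMD, ?_⟩
        have h2 : ε < (∑ i, (q i : ℝ) * Pr M (best i) (s i) (T i)) - (qf : ℝ) := by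
          linarith [hb σ]
        exact lt_of_lt_of_le h2 (le_abs_self _)
      · refine ⟨worst, hwMD, ?_⟩
        have h2 : ε < -((∑ i, (q i : ℝ) * Pr M (worst i) (s i) (T i)) - (qf : ℝ)) := by
          linarith [hw σ]
        exact lt_of_lt_of_le h2 (neg_le_abs _)
    · rintro ⟨σ, -, hσ⟩
      exact ⟨σ, hσ⟩
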